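/- Partial minimization of a quadratic form with homogeneous equality constraints yields a quadratic form with homogeneous constraints and a linear minimizer: if f(x,u) = (1/2)[x;u]^T [[P_xx, P_xu],[P_ux, P_uu]][x;u] + I(F_x x + F_u u = 0) is convex, and for every feasible x the infimum over u is attained, then g(x) = inf_u f(x,u) is of the form (1/2) x^T P̂ x + I(F̂ x = 0) for some symmetric P̂ and matrix F̂, and there exists K ∈ R^{m×n} such that u = Kx attains the infimum for every x in the domain of g. -/

import Mathlib

open Matrix

/-- The quadratic form `(1/2)[x;u]ᵀ [[Pxx, Pxu], [Pxuᵀ, Puu]] [x;u]`. -/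
noncomputable def quadForm2 {n m : ℕ}
    (Pxx : Matrix (Fin n) (Fin n) ℝ) (Pxu : Matrix (Fin n) (Fin m) ℝ)
    (Puu : Matrix (Fin m) (Fin m) ℝ) (x : Fin n → ℝ) (u : Fin m → ℝ) : ℝ :=
  (1 / 2) * (x ⬝ᵥ Pxx.mulVec x + 2 * (x ⬝ᵥ Pxu.mulVec u) + u ⬝ᵥ Puu.mulVec u)

/-- The quadratic form plus the `0/+∞` indicator of the subspace `{(x,u) | Fₓx + Fᵤu = 0}`. -/
noncomputable def homExtQuad2 {n m p : ℕ}
    (Pxx : Matrix (Fin n) (Fin n) ℝ) (Pxu : Matrix (Fin n) (Fin m) ℝ)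
    (Puu : Matrix (Fin m) (Fin m) ℝ)
    (Fx : Matrix (Fin p) (Fin n) ℝ) (Fu : Matrix (Fin p) (Fin m) ℝ)
    (x : Fin n → ℝ) (u : Fin m → ℝ) : EReal :=
  if Fx.mulVec x + Fu.mulVec u = 0 then ((quadForm2 Pxx Pxu Puu x u : ℝ) : EReal) else ⊤

lemma dot_transpose_mulVec {a b : ℕ} (M : Matrix (Fin a) (Fin b) ℝ)
    (v : Fin b → ℝ) (w : Fin a → ℝ) :
    v ⬝ᵥ Mᵀ.mulVec w = w ⬝ᵥ M.mulVec v := by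
  rw [Matrix.mulVec_transpose, dotProduct_comm, ← Matrix.dotProduct_mulVec]

section Aux
variable {n m p : ℕ}
  (Pxx : Matrix (Fin n) (Fin n) ℝ) (Pxu : Matrix (Fin n) (Fin m) ℝ)
  (Puu : Matrix (Fin m) (Fin m) ℝ)
  (Fx : Matrix (Fin p) (Fin n) ℝ) (Fu : Matrix (Fin p) (Fin m) ℝ)

lemma qf_smul (c : ℝ) (x : Fin n → ℝ) (u : Fin m → ℝ) :
    quadForm2 Pxx Pxu Puu (c • x) (c • u) = c ^ 2 * quadForm2 Pxx Pxu Puu x u := by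
  simp only [quadForm2, Matrix.mulVec_smul, dotProduct_smul, smul_dotProduct, smul_eq_mul]
  ring

lemma qf_par (x y : Fin n → ℝ) (u v : Fin m → ℝ) :
    quadForm2 Pxx Pxu Puu (x + y) (u + v) + quadForm2 Pxx Pxu Puu (x - y) (u - v)
      = 2 * quadForm2 Pxx Pxu Puu x u + 2 * quadForm2 Pxx Pxu Puu y v := by
  simp only [quadForm2, Matrix.mulVec_add, Matrix.mulVec_sub, dotProduct_add, add_dotProduct,
    dotProduct_sub, sub_dotProduct]
  ring

def IsMinAt (x : Fin n → ℝ) (u : Fin m → ℝ) : Prop :=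
  Fx.mulVec x + Fu.mulVec u = 0 ∧
  ∀ u', Fx.mulVec x + Fu.mulVec u' = 0 →
    quadForm2 Pxx Pxu Puu x u ≤ quadForm2 Pxx Pxu Puu x u'

variable (hattain : ∀ x, (∃ u, Fx.mulVec x + Fu.mulVec u = 0) →
      ∃ u, Fx.mulVec x + Fu.mulVec u = 0 ∧
        ∀ u', Fx.mulVec x + Fu.mulVec u' = 0 →
          quadForm2 Pxx Pxu Puu x u ≤ quadForm2 Pxx Pxu Puu x u')

include hattain

lemma isMinAt_zero : IsMinAt Pxx Pxu Puu Fx Fu 0 0 := by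
  have h0 : Fx.mulVec (0 : Fin n → ℝ) + Fu.mulVec (0 : Fin m → ℝ) = 0 := by simp
  refine ⟨h0, fun u' hu' => ?_⟩
  have hq0 : quadForm2 Pxx Pxu Puu 0 0 = 0 := by
    simpa using qf_smul Pxx Pxu Puu 0 0 0
  rw [hq0]
  by_contra hlt
  push_neg at hlt
  obtain ⟨u0, hu0, hmin⟩ := hattain 0 ⟨0, h0⟩
  have hscale : ∀ t : ℝ, quadForm2 Pxx Pxu Puu 0 u0 ≤ t ^ 2 * quadForm2 Pxx Pxu Puu 0 u' := by
    intro t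
    have hfeas : Fx.mulVec (0 : Fin n → ℝ) + Fu.mulVec (t • u') = 0 := by
      have := congrArg (fun v => t • v) hu'
      simpa [Matrix.mulVec_smul, smul_add] using this
    have := hmin (t • u') hfeas
    have heq : quadForm2 Pxx Pxu Puu 0 (t • u') = t ^ 2 * quadForm2 Pxx Pxu Puu 0 u' := by
      simpa using qf_smul Pxx Pxu Puu t 0 u'
    linarith [this, heq.symm ▸ this]
  -- t² * (negative) → -∞ ; pick t large
  obtain ⟨t, ht⟩ : ∃ t : ℝ, t ^ 2 * quadForm2 Pxx Pxu Puu 0 u' < quadForm2 Pxx Pxu Puu 0 u0 := by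
    set q := quadForm2 Pxx Pxu Puu 0 u'
    set c := quadForm2 Pxx Pxu Puu 0 u0
    obtain ⟨t, ht⟩ := exists_nat_gt (max 1 ((c - 1) / q))
    refine ⟨t, ?_⟩
    have ht1 : (1:ℝ) ≤ t := le_of_lt (lt_of_le_of_lt (le_max_left _ _) ht)
    have ht2 : (c - 1) / q < t := lt_of_le_of_lt (le_max_right _ _) ht
    have hq : q < 0 := hlt
    have : t * q < (c - 1) / q * q := by
      exact (mul_lt_mul_right_of_neg hq).mpr ht2
    have hdq : (c - 1) / q * q = c - 1 := div_mul_cancel₀ _ (ne_of_lt hq)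
    have hts : (t:ℝ) ≤ (t:ℝ) ^ 2 := by nlinarith
    have h2 : (t:ℝ) ^ 2 * q ≤ (t:ℝ) * q := mul_le_mul_of_nonpos_right hts (le_of_lt hq)
    linarith
  exact absurd (hscale t) (not_le.mpr ht)

lemma isMinAt_smul (c : ℝ) (x : Fin n → ℝ) (u : Fin m → ℝ)
    (h : IsMinAt Pxx Pxu Puu Fx Fu x u) :
    IsMinAt Pxx Pxu Puu Fx Fu (c • x) (c • u) := by
  rcases eq_or_ne c 0 with rfl | hc
  · simpa using isMinAt_zero Pxx Pxu Puu Fx Fu hattain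
  obtain ⟨hfeas, hmin⟩ := h
  constructor
  · have := congrArg (fun v => c • v) hfeas
    simpa [Matrix.mulVec_smul, smul_add] using this
  · intro u' hu'
    have hfeas' : Fx.mulVec x + Fu.mulVec (c⁻¹ • u') = 0 := by
      have := congrArg (fun v => c⁻¹ • v) hu'
      simpa [Matrix.mulVec_smul, smul_add, smul_smul, inv_mul_cancel₀ hc] using this
    have h1 := hmin (c⁻¹ • u') hfeas'
    have h2 : quadForm2 Pxx Pxu Puu (c • x) (c • u) = c ^ 2 * quadForm2 Pxx Pxu Puu x u :=
      qf_smul _ _ _ _ _ _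
    have h3 : quadForm2 Pxx Pxu Puu (c • x) u' = c ^ 2 * quadForm2 Pxx Pxu Puu x (c⁻¹ • u') := by
      have : (c • x) = c • x := rfl
      have := qf_smul Pxx Pxu Puu c x (c⁻¹ • u')
      rw [smul_smul, mul_inv_cancel₀ hc, one_smul] at this
      exact this
    have hc2 : (0:ℝ) < c ^ 2 := by positivity
    rw [h2, h3]
    exact (mul_le_mul_iff_right₀ hc2).mpr h1

lemma isMinAt_add (x y : Fin n → ℝ) (u v : Fin m → ℝ)
    (hu : IsMinAt Pxx Pxu Puu Fx Fu x u) (hv : IsMinAt Pxx Pxu Puu Fx Fu y v) :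
    IsMinAt Pxx Pxu Puu Fx Fu (x + y) (u + v) := by
  obtain ⟨hfu, hmu⟩ := hu
  obtain ⟨hfv, hmv⟩ := hv
  have hfeas_add : Fx.mulVec (x + y) + Fu.mulVec (u + v) = 0 := by
    rw [Matrix.mulVec_add, Matrix.mulVec_add]
    rw [show Fx.mulVec x + Fx.mulVec y + (Fu.mulVec u + Fu.mulVec v)
      = (Fx.mulVec x + Fu.mulVec u) + (Fx.mulVec y + Fu.mulVec v) by abel, hfu, hfv, add_zero]
  have hfeas_sub : Fx.mulVec (x - y) + Fu.mulVec (u - v) = 0 := by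
    rw [Matrix.mulVec_sub, Matrix.mulVec_sub]
    rw [show Fx.mulVec x - Fx.mulVec y + (Fu.mulVec u - Fu.mulVec v)
      = (Fx.mulVec x + Fu.mulVec u) - (Fx.mulVec y + Fu.mulVec v) by abel, hfu, hfv, sub_zero]
  obtain ⟨w, hw, hminw⟩ := hattain (x + y) ⟨u + v, hfeas_add⟩
  obtain ⟨z, hz, hminz⟩ := hattain (x - y) ⟨u - v, hfeas_sub⟩
  -- feasibility of half-combinations
  have hfx : Fx.mulVec x + Fu.mulVec ((1/2 : ℝ) • (w + z)) = 0 := by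
    have : Fx.mulVec x + Fu.mulVec ((1/2 : ℝ) • (w + z))
        = (1/2 : ℝ) • ((Fx.mulVec (x + y) + Fu.mulVec w) + (Fx.mulVec (x - y) + Fu.mulVec z)) := by
      simp only [Matrix.mulVec_add, Matrix.mulVec_sub, Matrix.mulVec_smul]
      module
    rw [this, hw, hz, add_zero, smul_zero]
  have hfy : Fx.mulVec y + Fu.mulVec ((1/2 : ℝ) • (w - z)) = 0 := by
    have : Fx.mulVec y + Fu.mulVec ((1/2 : ℝ) • (w - z))
        = (1/2 : ℝ) • ((Fx.mulVec (x + y) + Fu.mulVec w) - (Fx.mulVec (x - y) + Fu.mulVec z)) := by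
      simp only [Matrix.mulVec_add, Matrix.mulVec_sub, Matrix.mulVec_smul]
      module
    rw [this, hw, hz, sub_zero, smul_zero]
  -- the key identity
  have hkey : 2 * quadForm2 Pxx Pxu Puu x ((1/2 : ℝ) • (w + z))
      + 2 * quadForm2 Pxx Pxu Puu y ((1/2 : ℝ) • (w - z))
      = quadForm2 Pxx Pxu Puu (x + y) w + quadForm2 Pxx Pxu Puu (x - y) z := by
    have hp := qf_par Pxx Pxu Puu ((1/2 : ℝ) • (x + y)) ((1/2 : ℝ) • (x - y))
      ((1/2 : ℝ) • w) ((1/2 : ℝ) • z)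
    have e1 : (1/2 : ℝ) • (x + y) + (1/2 : ℝ) • (x - y) = x := by module
    have e2 : (1/2 : ℝ) • (x + y) - (1/2 : ℝ) • (x - y) = y := by module
    have e3 : (1/2 : ℝ) • w + (1/2 : ℝ) • z = (1/2 : ℝ) • (w + z) := by module
    have e4 : (1/2 : ℝ) • w - (1/2 : ℝ) • z = (1/2 : ℝ) • (w - z) := by module
    rw [e1, e2, e3, e4] at hp
    have s1 := qf_smul Pxx Pxu Puu (1/2 : ℝ) (x + y) w
    have s2 := qf_smul Pxx Pxu Puu (1/2 : ℝ) (x - y) z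
    rw [s1, s2] at hp
    nlinarith [hp]
  have hA := hminw (u + v) hfeas_add
  have hB := hminz (u - v) hfeas_sub
  have hpar := qf_par Pxx Pxu Puu x y u v
  have hux := hmu ((1/2 : ℝ) • (w + z)) hfx
  have huy := hmv ((1/2 : ℝ) • (w - z)) hfy
  -- conclude f(x+y, u+v) = f(x+y, w) = min
  have hEq : quadForm2 Pxx Pxu Puu (x + y) (u + v) = quadForm2 Pxx Pxu Puu (x + y) w := by
    linarith
  refine ⟨hfeas_add, fun u'' hu'' => ?_⟩
  rw [hEq]
  exact hminw u'' hu''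

end Aux

/-- partial minimization over `u` of a convex quadratic form with homogeneous
equality constraints, with the infimum attained for every feasible `x`, yields a quadratic
form with homogeneous constraints `g(x) = (1/2)xᵀP̂x + I(F̂x = 0)`, and there is a `K` such
that `u = Kx` attains the infimum for every `x` in the domain of `g`. -/
theorem homogeneous_partial_minimization {n m p : ℕ}
    (Pxx : Matrix (Fin n) (Fin n) ℝ) (hPxx : Pxx.IsSymm)
    (Pxu : Matrix (Fin n) (Fin m) ℝ)
    (Puu : Matrix (Fin m) (Fin m) ℝ) (hPuu : Puu.IsSymm)
    (Fx : Matrix (Fin p) (Fin n) ℝ) (Fu : Matrix (Fin p) (Fin m) ℝ)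
    (hconv : ConvexOn ℝ {pr : (Fin n → ℝ) × (Fin m → ℝ) |
        Fx.mulVec pr.1 + Fu.mulVec pr.2 = 0}
      (fun pr => quadForm2 Pxx Pxu Puu pr.1 pr.2))
    (hattain : ∀ x, (∃ u, Fx.mulVec x + Fu.mulVec u = 0) →
      ∃ u, Fx.mulVec x + Fu.mulVec u = 0 ∧
        ∀ u', Fx.mulVec x + Fu.mulVec u' = 0 →
          quadForm2 Pxx Pxu Puu x u ≤ quadForm2 Pxx Pxu Puu x u') :
    ∃ (Ph : Matrix (Fin n) (Fin n) ℝ) (ph : ℕ) (Fh : Matrix (Fin ph) (Fin n) ℝ)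
      (K : Matrix (Fin m) (Fin n) ℝ),
      Ph.IsSymm ∧
      (∀ x, (⨅ u, homExtQuad2 Pxx Pxu Puu Fx Fu x u) =
        if Fh.mulVec x = 0 then (((1 / 2) * (x ⬝ᵥ Ph.mulVec x) : ℝ) : EReal) else ⊤) ∧
      (∀ x, Fh.mulVec x = 0 →
        Fx.mulVec x + Fu.mulVec (K.mulVec x) = 0 ∧
        homExtQuad2 Pxx Pxu Puu Fx Fu x (K.mulVec x) =
          ⨅ u, homExtQuad2 Pxx Pxu Puu Fx Fu x u) := by
  classical
  -- the submodule of feasible x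
  set S : Submodule ℝ (Fin n → ℝ) :=
    { carrier := {x | ∃ u, Fx.mulVec x + Fu.mulVec u = 0}
      add_mem' := by
        rintro a b ⟨u, hu⟩ ⟨v, hv⟩
        refine ⟨u + v, ?_⟩
        rw [Matrix.mulVec_add, Matrix.mulVec_add]
        rw [show Fx.mulVec a + Fx.mulVec b + (Fu.mulVec u + Fu.mulVec v)
          = (Fx.mulVec a + Fu.mulVec u) + (Fx.mulVec b + Fu.mulVec v) by abel, hu, hv, add_zero]
      zero_mem' := ⟨0, by simp⟩
      smul_mem' := by
        rintro c a ⟨u, hu⟩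
        refine ⟨c • u, ?_⟩
        have := congrArg (fun v => c • v) hu
        simpa [Matrix.mulVec_smul, smul_add] using this } with hS
  obtain ⟨S', hcompl⟩ := Submodule.exists_isCompl S
  let fproj : (Fin n → ℝ) →ₗ[ℝ] (Fin n → ℝ) :=
    S'.subtype ∘ₗ (S'.projectionOnto S hcompl.symm)
  let Fh := LinearMap.toMatrix' fproj
  have hFhmul : ∀ x, Fh.mulVec x = fproj x := by
    intro x
    rw [show Fh.mulVec x = Matrix.toLin' Fh x from rfl, Matrix.toLin'_toMatrix']
  have hFh : ∀ x, Fh.mulVec x = 0 ↔ x ∈ S := by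
    intro x
    rw [hFhmul]
    constructor
    · intro h
      have h0 : (S'.projectionOnto S hcompl.symm) x = 0 := by
        have := h
        simpa [fproj, Submodule.coe_eq_zero] using this
      have : x ∈ LinearMap.ker (S'.projectionOnto S hcompl.symm) :=
        LinearMap.mem_ker.mpr h0
      rwa [Submodule.ker_projectionOnto] at this
    · intro hx
      have : (S'.projectionOnto S hcompl.symm) x = 0 := by
        have : x ∈ LinearMap.ker (S'.projectionOnto S hcompl.symm) := by
          rw [Submodule.ker_projectionOnto]; exact hx
        exact LinearMap.mem_ker.mp this
      simp [fproj, this]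
  -- linear selection of minimizers on S
  have hsel : ∀ s : S, ∃ u, Fx.mulVec (s : Fin n → ℝ) + Fu.mulVec u = 0 ∧
      ∀ u', Fx.mulVec (s : Fin n → ℝ) + Fu.mulVec u' = 0 →
        quadForm2 Pxx Pxu Puu (s : Fin n → ℝ) u ≤ quadForm2 Pxx Pxu Puu (s : Fin n → ℝ) u' := by
    intro s
    exact hattain (s : Fin n → ℝ) s.2
  choose sel hsel1 hsel2 using hsel
  let b := Module.Basis.ofVectorSpace ℝ S
  let k : S →ₗ[ℝ] (Fin m → ℝ) := b.constr ℝ (fun i => sel (b i))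
  have hk : ∀ s : S, IsMinAt Pxx Pxu Puu Fx Fu (s : Fin n → ℝ) (k s) := by
    intro s
    have hs : s ∈ Submodule.span ℝ (Set.range b) := by rw [b.span_eq]; trivial
    refine Submodule.span_induction (p := fun t _ => IsMinAt Pxx Pxu Puu Fx Fu t.val (k t))
      ?_ ?_ ?_ ?_ hs
    · rintro _ ⟨i, rfl⟩
      show IsMinAt Pxx Pxu Puu Fx Fu (b i).val (k (b i))
      rw [show k (b i) = sel (b i) from b.constr_basis ℝ _ i]
      exact ⟨hsel1 (b i), hsel2 (b i)⟩
    · show IsMinAt Pxx Pxu Puu Fx Fu (0 : S).val (k 0)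
      rw [map_zero]
      have h0 : ((0 : S) : Fin n → ℝ) = 0 := rfl
      rw [h0]
      exact isMinAt_zero Pxx Pxu Puu Fx Fu hattain
    · intro a c _ _ hpa hpc
      show IsMinAt Pxx Pxu Puu Fx Fu (a + c).val (k (a + c))
      rw [map_add]
      have hac : ((a + c : S) : Fin n → ℝ) = (a : Fin n → ℝ) + (c : Fin n → ℝ) := rfl
      rw [hac]
      exact isMinAt_add Pxx Pxu Puu Fx Fu hattain _ _ _ _ hpa hpc
    · intro r a _ hpa
      show IsMinAt Pxx Pxu Puu Fx Fu (r • a).val (k (r • a))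
      rw [_root_.map_smul]
      have hra : ((r • a : S) : Fin n → ℝ) = r • (a : Fin n → ℝ) := rfl
      rw [hra]
      exact isMinAt_smul Pxx Pxu Puu Fx Fu hattain r _ _ hpa
  -- the matrix K
  let K : Matrix (Fin m) (Fin n) ℝ :=
    LinearMap.toMatrix' (k ∘ₗ (S.projectionOnto S' hcompl))
  have hKx : ∀ x (hx : x ∈ S), K.mulVec x = k ⟨x, hx⟩ := by
    intro x hx
    rw [show K.mulVec x = Matrix.toLin' K x from rfl, Matrix.toLin'_toMatrix']
    have : (S.projectionOnto S' hcompl) x = ⟨x, hx⟩ := by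
      have := Submodule.projectionOnto_apply_left hcompl ⟨x, hx⟩
      simpa using this
    simp [LinearMap.comp_apply, this]
  -- K minimizes on S
  have hKmin : ∀ x, x ∈ S → Fx.mulVec x + Fu.mulVec (K.mulVec x) = 0 ∧
      ∀ u', Fx.mulVec x + Fu.mulVec u' = 0 →
        quadForm2 Pxx Pxu Puu x (K.mulVec x) ≤ quadForm2 Pxx Pxu Puu x u' := by
    intro x hx
    rw [hKx x hx]
    exact ⟨(hk ⟨x, hx⟩).1, (hk ⟨x, hx⟩).2⟩
  -- Ph
  let Ph : Matrix (Fin n) (Fin n) ℝ := Pxx + Pxu * K + Kᵀ * Pxuᵀ + Kᵀ * Puu * K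
  have hPhsymm : Ph.IsSymm := by
    unfold Matrix.IsSymm
    show (Pxx + Pxu * K + Kᵀ * Pxuᵀ + Kᵀ * Puu * K)ᵀ = _
    rw [Matrix.transpose_add, Matrix.transpose_add, Matrix.transpose_add,
      Matrix.transpose_mul, Matrix.transpose_mul, Matrix.transpose_mul, Matrix.transpose_mul,
      Matrix.transpose_transpose, Matrix.transpose_transpose, hPxx.eq, hPuu.eq]
    show Pxx + Kᵀ * Pxuᵀ + Pxu * K + Kᵀ * (Puu * K) = _
    rw [← Matrix.mul_assoc]
    show _ = Pxx + Pxu * K + Kᵀ * Pxuᵀ + Kᵀ * Puu * K; abel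
  have hPhval : ∀ x, (1 / 2 : ℝ) * (x ⬝ᵥ Ph.mulVec x)
      = quadForm2 Pxx Pxu Puu x (K.mulVec x) := by
    intro x
    set y := K.mulVec x with hy
    have e1 : (Pxu * K).mulVec x = Pxu.mulVec y := by
      rw [← Matrix.mulVec_mulVec]
    have e2 : x ⬝ᵥ (Kᵀ * Pxuᵀ).mulVec x = x ⬝ᵥ Pxu.mulVec y := by
      rw [show Kᵀ * Pxuᵀ = (Pxu * K)ᵀ by rw [Matrix.transpose_mul],
        dot_transpose_mulVec, e1, dotProduct_comm]
    have e3 : x ⬝ᵥ (Kᵀ * Puu * K).mulVec x = y ⬝ᵥ Puu.mulVec y := by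
      rw [Matrix.mul_assoc, ← Matrix.mulVec_mulVec, dot_transpose_mulVec,
        ← Matrix.mulVec_mulVec, ← hy, dotProduct_comm]
    show (1 / 2 : ℝ) * (x ⬝ᵥ (Pxx + Pxu * K + Kᵀ * Pxuᵀ + Kᵀ * Puu * K).mulVec x) = _
    rw [Matrix.add_mulVec, Matrix.add_mulVec, Matrix.add_mulVec, dotProduct_add,
      dotProduct_add, dotProduct_add, e2, e3, e1]
    unfold quadForm2
    ring
  -- value of the infimum on S
  have hginf : ∀ x, x ∈ S → (⨅ u, homExtQuad2 Pxx Pxu Puu Fx Fu x u)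
      = ((quadForm2 Pxx Pxu Puu x (K.mulVec x) : ℝ) : EReal) := by
    intro x hxS
    obtain ⟨hfeas, hmin⟩ := hKmin x hxS
    apply le_antisymm
    · refine iInf_le_of_le (K.mulVec x) ?_
      simp only [homExtQuad2, if_pos hfeas, le_refl]
    · refine le_iInf fun u => ?_
      simp only [homExtQuad2]
      split_ifs with hu
      · exact EReal.coe_le_coe_iff.mpr (hmin u hu)
      · exact le_top
  refine ⟨Ph, n, Fh, K, hPhsymm, ?_, ?_⟩
  · intro x
    by_cases hx : Fh.mulVec x = 0
    · rw [if_pos hx, hginf x ((hFh x).mp hx), hPhval x]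
    · rw [if_neg hx, iInf_eq_top]
      intro u
      simp only [homExtQuad2]
      rw [if_neg]
      intro hfe
      exact hx ((hFh x).mpr ⟨u, hfe⟩)
  · intro x hx
    have hxS : x ∈ S := (hFh x).mp hx
    obtain ⟨hfeas, _⟩ := hKmin x hxS
    refine ⟨hfeas, ?_⟩
    rw [hginf x hxS]
    simp only [homExtQuad2, if_pos hfeas]
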